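/- Let b = λ + iη with λ, η ∈ ℝ and λ > 0. Define ℛₙ(b;z) = ((2λ)ₙ/(λ)ₙ) · Σ_{k=0}^{n} [(−n)ₖ(b)ₖ/((2λ)ₖ k!)] (1−z)ᵏ and Φₙ(b;z) = ((2λ+1)ₙ/((b+1)ₙ)) · Σ_{k=0}^{n} [(−n)ₖ(b+1)ₖ/((2λ+1)ₖ k!)] (1−z)ᵏ. Then for every n ≥ 1, ℛₙ(b;z) = ((b)ₙ/(λ)ₙ) · [ z·Φₙ₋₁(b;z) + ((conj(b))ₙ/(b)ₙ) · Φ*ₙ₋₁(b;z) ], where Φ*ₙ₋₁(b;z) = z^{n−1} · conj(Φₙ₋₁(b; 1/conj(z))) is the reversed polynomial of Φₙ₋₁(b;·); i.e., ℛₙ(b;·) is a para-orthogonal polynomial associated with Φₙ₋₁(b;·). -/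

import Mathlib

open Complex Finset

/-- Pochhammer symbol `(a)ₖ` over ℂ. -/
noncomputable def poch (a : ℂ) (k : ℕ) : ℂ := Polynomial.eval a (ascPochhammer ℂ k)

/-- The polynomials `ℛₙ(b;z)` (hypergeometric form), with `b = λ + iη`. -/
noncomputable def RR (lam eta : ℝ) (n : ℕ) (z : ℂ) : ℂ :=
  (poch (2 * lam) n / poch (lam : ℂ) n) *
    ∑ k ∈ Finset.range (n + 1),
      poch (-(n : ℂ)) k * poch ((lam : ℂ) + (eta : ℂ) * I) k /
          (poch (2 * lam) k * (Nat.factorial k : ℂ)) * (1 - z) ^ k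

/-- The monic orthogonal polynomials `Φₙ(b;z)` on the unit circle, `b = λ + iη`. -/
noncomputable def Phi (lam eta : ℝ) (n : ℕ) (z : ℂ) : ℂ :=
  (poch (2 * lam + 1) n / poch ((lam : ℂ) + (eta : ℂ) * I + 1) n) *
    ∑ k ∈ Finset.range (n + 1),
      poch (-(n : ℂ)) k * poch ((lam : ℂ) + (eta : ℂ) * I + 1) k /
          (poch (2 * lam + 1) k * (Nat.factorial k : ℂ)) * (1 - z) ^ k

/-- The reversed polynomial `Φ*ₙ(b;z) = zⁿ · conj(Φₙ(b; 1/conj z))`. -/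
noncomputable def PhiStar (lam eta : ℝ) (n : ℕ) (z : ℂ) : ℂ :=
  z ^ n * (starRingEnd ℂ) (Phi lam eta n (((starRingEnd ℂ) z)⁻¹))

lemma poch_zero (a : ℂ) : poch a 0 = 1 := by simp [poch]

lemma poch_succ_left (a : ℂ) (k : ℕ) : poch a (k + 1) = a * poch (a + 1) k := by
  simp [poch, ascPochhammer_succ_left, Polynomial.eval_comp]

lemma poch_succ_right (a : ℂ) (k : ℕ) : poch a (k + 1) = poch a k * (a + k) := by
  simpa [poch] using ascPochhammer_succ_eval k a

lemma poch_conj (a : ℂ) (k : ℕ) :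
    (starRingEnd ℂ) (poch a k) = poch ((starRingEnd ℂ) a) k := by
  induction k with
  | zero => simp [poch_zero]
  | succ k ih => simp [poch_succ_right, ih]

lemma poch_ne_zero {a : ℂ} (h : 0 < a.re) (k : ℕ) : poch a k ≠ 0 := by
  induction k with
  | zero => simp [poch_zero]
  | succ k ih =>
    rw [poch_succ_right]
    refine mul_ne_zero ih ?_
    intro h0
    have hr := congrArg Complex.re h0
    simp only [Complex.add_re, Complex.natCast_re, Complex.zero_re] at hr
    have : (0:ℝ) ≤ (k:ℝ) := Nat.cast_nonneg k
    linarith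

lemma poch_add (a : ℂ) (k l : ℕ) : poch a (k + l) = poch a k * poch (a + k) l := by
  have := ascPochhammer_mul ℂ k l
  have h2 := congrArg (Polynomial.eval a) this
  simpa [poch, Polynomial.eval_comp] using h2.symm

lemma poch_neg_natCast (j k : ℕ) :
    poch (-(j:ℂ)) k = (-1)^k * (j.descFactorial k : ℂ) := by
  induction k with
  | zero => simp [poch_zero]
  | succ k ih =>
    rw [poch_succ_right, ih, Nat.descFactorial_succ]
    rcases le_or_gt j k with h | h
    · rcases Nat.lt_or_ge j k with h' | h'
      · rw [Nat.descFactorial_of_lt h']; simp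
      · have : j = k := le_antisymm h h'
        subst this
        simp [Nat.sub_self]
    · have : ((j - k : ℕ) : ℂ) = (j:ℂ) - k := by
        push_cast [Nat.cast_sub h.le]; ring
      push_cast [this]
      ring

lemma poch_neg_nat_eq_zero {j k : ℕ} (h : j < k) : poch (-(j:ℂ)) k = 0 := by
  rw [poch_neg_natCast, Nat.descFactorial_of_lt h]; simp

lemma chuW (j : ℕ) : ∀ (a c : ℂ),
    ∑ k ∈ range (j + 1), (j.choose k : ℂ) * (-1)^k * poch a k * poch (c + k) (j - k)
      = poch (c - a) j := by
  induction j with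
  | zero => intro a c; simp [poch_zero]
  | succ j ih =>
    intro a c
    set t : ℕ → ℂ := fun k => (-1)^k * poch a k * poch (c + k) (j + 1 - k) with ht
    have key : ∑ k ∈ range (j + 1 + 1), ((j+1).choose k : ℂ) * (-1)^k * poch a k * poch (c + k) (j + 1 - k)
        = ∑ k ∈ range (j + 1 + 1), ((j+1).choose k : ℂ) * t k := by
      apply Finset.sum_congr rfl; intro k _; simp [ht]; ring
    rw [key]
    have split : ∑ k ∈ range (j + 1 + 1), ((j+1).choose k : ℂ) * t k
        = t 0 + ∑ k ∈ range (j + 1), ((j.choose k : ℂ) + (j.choose (k+1) : ℂ)) * t (k+1) := by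
      rw [Finset.sum_range_succ']
      have : ∀ k, ((j+1).choose (k+1) : ℂ) = (j.choose k : ℂ) + (j.choose (k+1) : ℂ) := by
        intro k; rw [Nat.choose_succ_succ]; push_cast; ring
      simp only [this, Nat.choose_zero_right, Nat.cast_one, one_mul]
      ring
    rw [split]
    have split2 : ∑ k ∈ range (j + 1), ((j.choose k : ℂ) + (j.choose (k+1) : ℂ)) * t (k+1)
        = (∑ k ∈ range (j + 1), (j.choose k : ℂ) * t (k+1))
          + (∑ k ∈ range (j + 1), (j.choose (k+1) : ℂ) * t (k+1)) := by
      rw [← Finset.sum_add_distrib]; apply Finset.sum_congr rfl; intro k _; ring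
    rw [split2]
    have shift : ∑ k ∈ range (j + 1), (j.choose (k+1) : ℂ) * t (k+1)
        = (∑ k ∈ range (j + 1), (j.choose k : ℂ) * t k) - t 0 := by
      have h1 : ∑ k ∈ range (j + 2), (j.choose k : ℂ) * t k
          = (∑ k ∈ range (j + 1), (j.choose (k+1) : ℂ) * t (k+1)) + (j.choose 0 : ℂ) * t 0 := by
        rw [Finset.sum_range_succ']
      have h2 : ∑ k ∈ range (j + 2), (j.choose k : ℂ) * t k
          = ∑ k ∈ range (j + 1), (j.choose k : ℂ) * t k := by
        rw [Finset.sum_range_succ, Nat.choose_succ_self]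
        simp
      rw [h2] at h1
      simp only [Nat.choose_zero_right, Nat.cast_one, one_mul] at h1
      linear_combination -h1
    rw [shift]
    have merge : t 0 + ((∑ k ∈ range (j + 1), (j.choose k : ℂ) * t (k+1))
          + ((∑ k ∈ range (j + 1), (j.choose k : ℂ) * t k) - t 0))
        = ∑ k ∈ range (j + 1), (j.choose k : ℂ) * (t (k+1) + t k) := by
      have h3 : ∀ k ∈ range (j+1), (j.choose k : ℂ) * (t (k+1) + t k)
          = (j.choose k : ℂ) * t (k+1) + (j.choose k : ℂ) * t k := by intro k _; ring
      rw [Finset.sum_congr rfl h3, Finset.sum_add_distrib]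
      ring
    rw [merge]
    have step : ∀ k ∈ range (j + 1), (j.choose k : ℂ) * (t (k+1) + t k)
        = (c - a) * ((j.choose k : ℂ) * (-1)^k * poch a k * poch ((c+1) + k) (j - k)) := by
      intro k hk
      have hk' : k ≤ j := Nat.lt_succ_iff.mp (Finset.mem_range.mp hk)
      have e1 : j + 1 - k = (j - k) + 1 := by omega
      have e2 : j + 1 - (k+1) = j - k := by omega
      simp only [ht, e1, e2]
      rw [poch_succ_left (c + k) (j - k), poch_succ_right a k]
      have e3 : c + (k:ℂ) + 1 = (c + 1) + ((k:ℕ):ℂ) := by push_cast; ring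
      have e4 : c + (((k:ℕ)+1:ℕ):ℂ) = (c + 1) + ((k:ℕ):ℂ) := by push_cast; ring
      rw [e3, e4]
      ring
    rw [Finset.sum_congr rfl step, ← Finset.mul_sum, ih a (c+1)]
    have e5 : c + 1 - a = (c - a) + 1 := by ring
    rw [e5, ← poch_succ_left]

lemma chu (β γ : ℂ) (hγ : ∀ k : ℕ, poch γ k ≠ 0) (j : ℕ) :
    ∑ k ∈ range (j + 1), poch (-(j:ℂ)) k * poch β k / (poch γ k * (k.factorial : ℂ))
      = poch (γ - β) j / poch γ j := by
  have h := chuW j β γ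
  have key : ∀ k ∈ range (j + 1),
      (j.choose k : ℂ) * (-1)^k * poch β k * poch (γ + k) (j - k)
        = poch (-(j:ℂ)) k * poch β k / (poch γ k * (k.factorial : ℂ)) * poch γ j := by
    intro k hk
    have hk' : k ≤ j := Nat.lt_succ_iff.mp (Finset.mem_range.mp hk)
    have hsplit : poch γ j = poch γ k * poch (γ + k) (j - k) := by
      have := poch_add γ k (j - k)
      rwa [Nat.add_sub_cancel' hk'] at this
    rw [hsplit, poch_neg_natCast, Nat.descFactorial_eq_factorial_mul_choose]
    have hkf : ((k.factorial : ℂ)) ≠ 0 := Nat.cast_ne_zero.mpr k.factorial_ne_zero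
    field_simp [hγ k]
    push_cast; ring
  rw [Finset.sum_congr rfl key, ← Finset.sum_mul] at h
  rw [eq_div_iff (hγ j)]
  exact h

lemma natid (k j m : ℕ) (hkj : k ≤ j) :
    m.descFactorial k * ((m - k).choose (j - k)) * j.factorial
      = m.descFactorial j * j.descFactorial k := by
  rw [← Nat.descFactorial_mul_descFactorial hkj (n := m),
    Nat.descFactorial_eq_factorial_mul_choose (m - k) (j - k),
    ← Nat.choose_mul_factorial_mul_factorial hkj,
    Nat.descFactorial_eq_factorial_mul_choose j k]
  ring

lemma pfaff (β γ : ℂ) (hγ : ∀ k : ℕ, poch γ k ≠ 0) (m : ℕ) (w : ℂ) :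
    ∑ k ∈ range (m + 1),
        poch (-(m:ℂ)) k * poch β k / (poch γ k * (k.factorial : ℂ)) * ((-w)^k * (1-w)^(m-k))
      = ∑ j ∈ range (m + 1),
          poch (-(m:ℂ)) j * poch (γ - β) j / (poch γ j * (j.factorial : ℂ)) * w^j := by
  set H : ℕ → ℕ → ℂ := fun k j =>
    poch (-(m:ℂ)) k * poch β k / (poch γ k * (k.factorial : ℂ)) *
      (((m - k).choose (j - k) : ℂ) * (-1)^j * w^j) with hH
  have step1 : ∀ k ∈ range (m + 1),
      poch (-(m:ℂ)) k * poch β k / (poch γ k * (k.factorial : ℂ)) * ((-w)^k * (1-w)^(m-k))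
        = ∑ j ∈ Ico k (m + 1), H k j := by
    intro k hk
    have hk' : k ≤ m := Nat.lt_succ_iff.mp (Finset.mem_range.mp hk)
    rw [Finset.sum_Ico_eq_sum_range]
    have e1 : m + 1 - k = (m - k) + 1 := by omega
    rw [e1]
    have e2 : (1 - w)^(m-k) = ∑ i ∈ range ((m-k)+1), (-w)^i * 1^((m-k)-i) * ((m-k).choose i : ℂ) := by
      rw [show (1:ℂ) - w = -w + 1 by ring, add_pow]
    rw [e2, Finset.mul_sum, Finset.mul_sum]
    apply Finset.sum_congr rfl
    intro i _
    simp only [hH]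
    have e3 : k + i - k = i := by omega
    rw [e3]
    rw [neg_pow w k, neg_pow w i, pow_add (-1:ℂ) k i, pow_add w k i]
    ring
  rw [Finset.sum_congr rfl step1]
  have step2 : ∑ k ∈ range (m + 1), ∑ j ∈ Ico k (m + 1), H k j
      = ∑ j ∈ range (m + 1), ∑ k ∈ range (j + 1), H k j := by
    rw [Finset.range_eq_Ico, Finset.sum_Ico_Ico_comm]
    simp only [Finset.range_eq_Ico]
  rw [step2]
  apply Finset.sum_congr rfl
  intro j hj
  have hj' : j ≤ m := Nat.lt_succ_iff.mp (Finset.mem_range.mp hj)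
  have inner : ∀ k ∈ range (j + 1), H k j
      = poch (-(m:ℂ)) j / (j.factorial : ℂ) *
          (poch (-(j:ℂ)) k * poch β k / (poch γ k * (k.factorial : ℂ))) * w^j := by
    intro k hk
    have hkj : k ≤ j := Nat.lt_succ_iff.mp (Finset.mem_range.mp hk)
    simp only [hH]
    rw [poch_neg_natCast m k, poch_neg_natCast m j, poch_neg_natCast j k]
    have hid := natid k j m hkj
    have hid' : ((m.descFactorial k : ℂ)) * ((m - k).choose (j - k) : ℂ) * (j.factorial : ℂ)
        = (m.descFactorial j : ℂ) * (j.descFactorial k : ℂ) := by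
      exact_mod_cast congrArg (Nat.cast : ℕ → ℂ) hid
    have hjf : ((j.factorial : ℂ)) ≠ 0 := Nat.cast_ne_zero.mpr j.factorial_ne_zero
    have hkf : ((k.factorial : ℂ)) ≠ 0 := Nat.cast_ne_zero.mpr k.factorial_ne_zero
    field_simp [hγ k]
    linear_combination (poch β k * w^j) * hid'
  rw [Finset.sum_congr rfl inner, ← Finset.sum_mul, ← Finset.mul_sum, chu β γ hγ j]
  have hjf : ((j.factorial : ℂ)) ≠ 0 := Nat.cast_ne_zero.mpr j.factorial_ne_zero
  field_simp


lemma ne_zero_of_re_pos {x : ℂ} (h : 0 < x.re) : x ≠ 0 := fun h0 => by simp [h0] at h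

lemma re2l (lam : ℝ) (hlam : 0 < lam) : 0 < (2*(lam:ℂ)).re := by
  rw [show 2*(lam:ℂ) = ((2*lam:ℝ):ℂ) by push_cast; ring, Complex.ofReal_re]; linarith

lemma re2l1 (lam : ℝ) (hlam : 0 < lam) : 0 < (2*(lam:ℂ)+1).re := by
  rw [show 2*(lam:ℂ)+1 = ((2*lam+1:ℝ):ℂ) by push_cast; ring, Complex.ofReal_re]; linarith

lemma re2l1j (lam : ℝ) (hlam : 0 < lam) (j : ℕ) : 0 < (2*(lam:ℂ)+1+(j:ℂ)).re := by
  rw [show 2*(lam:ℂ)+1+(j:ℂ) = ((2*lam+1+(j:ℕ):ℝ):ℂ) by push_cast; ring, Complex.ofReal_re]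
  have : (0:ℝ) ≤ (j:ℝ) := Nat.cast_nonneg j
  linarith

lemma reb (lam eta : ℝ) (hlam : 0 < lam) : 0 < ((lam:ℂ)+(eta:ℂ)*I).re := by
  simp [hlam]

lemma rebb (lam eta : ℝ) (hlam : 0 < lam) : 0 < ((lam:ℂ)-(eta:ℂ)*I).re := by
  simp [hlam]

lemma reb1 (lam eta : ℝ) (hlam : 0 < lam) : 0 < ((lam:ℂ)+(eta:ℂ)*I+1).re := by
  simp; linarith

lemma rebb1 (lam eta : ℝ) (hlam : 0 < lam) : 0 < ((lam:ℂ)-(eta:ℂ)*I+1).re := by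
  simp; linarith

lemma relam (lam : ℝ) (hlam : 0 < lam) : 0 < ((lam:ℂ)).re := by simp [hlam]

set_option maxHeartbeats 1000000 in
lemma coeff_id (lam eta : ℝ) (hlam : 0 < lam) (m j : ℕ) (w : ℂ) :
    2*(lam:ℂ) * (poch (-(↑(m+1):ℂ)) (j+1) * poch ((lam:ℂ)+(eta:ℂ)*I) (j+1) /
        (poch (2*(lam:ℂ)) (j+1) * ((j+1).factorial:ℂ)) * w^(j+1))
    = ((lam:ℂ)+(eta:ℂ)*I) * (poch (-(m:ℂ)) (j+1) * poch ((lam:ℂ)+(eta:ℂ)*I+1) (j+1) /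
          (poch (2*(lam:ℂ)+1) (j+1) * ((j+1).factorial:ℂ)) * w^(j+1))
      - ((lam:ℂ)+(eta:ℂ)*I) * (poch (-(m:ℂ)) j * poch ((lam:ℂ)+(eta:ℂ)*I+1) j /
          (poch (2*(lam:ℂ)+1) j * (j.factorial:ℂ)) * w^j * w)
      + ((lam:ℂ)-(eta:ℂ)*I) * (poch (-(m:ℂ)) (j+1) * poch ((lam:ℂ)+(eta:ℂ)*I) (j+1) /
          (poch (2*(lam:ℂ)+1) (j+1) * ((j+1).factorial:ℂ)) * w^(j+1)) := by
  have e0 : (-(↑(m+1):ℂ)) + 1 = -(m:ℂ) := by push_cast; ring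
  rw [poch_succ_left (-(↑(m+1):ℂ)) j, e0,
      poch_succ_left ((lam:ℂ)+(eta:ℂ)*I) j,
      poch_succ_left (2*(lam:ℂ)) j,
      poch_succ_right (-(m:ℂ)) j,
      poch_succ_right ((lam:ℂ)+(eta:ℂ)*I+1) j,
      poch_succ_right (2*(lam:ℂ)+1) j,
      Nat.factorial_succ]
  have hZ : poch (2*(lam:ℂ)+1) j ≠ 0 := poch_ne_zero (re2l1 lam hlam) j
  have hjf : ((j.factorial:ℕ):ℂ) ≠ 0 := Nat.cast_ne_zero.mpr j.factorial_ne_zero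
  have hj1 : ((j:ℂ)+1) ≠ 0 := by
    have := Nat.cast_add_one_ne_zero (R := ℂ) j
    exact_mod_cast this
  have h2lam : (2*(lam:ℂ)) ≠ 0 := _root_.ne_zero_of_re_pos (re2l lam hlam)
  have hS : (2*(lam:ℂ)+1+(j:ℂ)) ≠ 0 := _root_.ne_zero_of_re_pos (re2l1j lam hlam j)
  push_cast
  rw [pow_succ w j]
  set X := poch (-(m:ℂ)) j with hXd
  set Y := poch ((lam:ℂ)+(eta:ℂ)*I+1) j with hYd
  set Z0 := poch (2*(lam:ℂ)+1) j with hZd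
  set F := ((j.factorial:ℕ):ℂ) with hFd
  field_simp
  have hl0 : (lam:ℂ) ≠ 0 := by exact_mod_cast hlam.ne'
  rw [neg_div', div_eq_iff hl0]
  ring

lemma main_id (lam eta : ℝ) (hlam : 0 < lam) (m : ℕ) (z : ℂ) :
    2*(lam:ℂ) * ∑ k ∈ range (m+1+1), poch (-(↑(m+1):ℂ)) k * poch ((lam:ℂ)+(eta:ℂ)*I) k /
        (poch (2*(lam:ℂ)) k * (k.factorial:ℂ)) * (1-z)^k
    = ((lam:ℂ)+(eta:ℂ)*I) * z * ∑ k ∈ range (m+1), poch (-(m:ℂ)) k * poch ((lam:ℂ)+(eta:ℂ)*I+1) k /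
        (poch (2*(lam:ℂ)+1) k * (k.factorial:ℂ)) * (1-z)^k
      + ((lam:ℂ)-(eta:ℂ)*I) * ∑ k ∈ range (m+1), poch (-(m:ℂ)) k * poch ((lam:ℂ)+(eta:ℂ)*I) k /
        (poch (2*(lam:ℂ)+1) k * (k.factorial:ℂ)) * (1-z)^k := by
  set w : ℂ := 1 - z with hw
  have hzw : z = 1 - w := by rw [hw]; ring
  rw [hzw]
  -- extend the two (m+1)-sums to (m+2)-sums
  have ext1 : ∑ k ∈ range (m+1+1), poch (-(m:ℂ)) k * poch ((lam:ℂ)+(eta:ℂ)*I+1) k /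
        (poch (2*(lam:ℂ)+1) k * (k.factorial:ℂ)) * w^k
      = ∑ k ∈ range (m+1), poch (-(m:ℂ)) k * poch ((lam:ℂ)+(eta:ℂ)*I+1) k /
        (poch (2*(lam:ℂ)+1) k * (k.factorial:ℂ)) * w^k := by
    rw [Finset.sum_range_succ, poch_neg_nat_eq_zero (Nat.lt_succ_self m)]
    simp
  have ext2 : ∑ k ∈ range (m+1+1), poch (-(m:ℂ)) k * poch ((lam:ℂ)+(eta:ℂ)*I) k /
        (poch (2*(lam:ℂ)+1) k * (k.factorial:ℂ)) * w^k
      = ∑ k ∈ range (m+1), poch (-(m:ℂ)) k * poch ((lam:ℂ)+(eta:ℂ)*I) k /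
        (poch (2*(lam:ℂ)+1) k * (k.factorial:ℂ)) * w^k := by
    rw [Finset.sum_range_succ, poch_neg_nat_eq_zero (Nat.lt_succ_self m)]
    simp
  rw [← ext1, ← ext2]
  -- turn (1-w) * ΣB into ΣB - Σ (B_k w^{k+1})
  have expand : ((lam:ℂ)+(eta:ℂ)*I) * (1-w) * ∑ k ∈ range (m+1+1), poch (-(m:ℂ)) k * poch ((lam:ℂ)+(eta:ℂ)*I+1) k /
        (poch (2*(lam:ℂ)+1) k * (k.factorial:ℂ)) * w^k
      = ((lam:ℂ)+(eta:ℂ)*I) * ∑ k ∈ range (m+1+1), poch (-(m:ℂ)) k * poch ((lam:ℂ)+(eta:ℂ)*I+1) k /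
            (poch (2*(lam:ℂ)+1) k * (k.factorial:ℂ)) * w^k
        - ((lam:ℂ)+(eta:ℂ)*I) * ∑ k ∈ range (m+1+1), poch (-(m:ℂ)) k * poch ((lam:ℂ)+(eta:ℂ)*I+1) k /
            (poch (2*(lam:ℂ)+1) k * (k.factorial:ℂ)) * w^k * w := by
    rw [← Finset.sum_mul]
    ring
  rw [expand]
  have ext3 : ∑ k ∈ range (m+1+1), poch (-(m:ℂ)) k * poch ((lam:ℂ)+(eta:ℂ)*I+1) k /
        (poch (2*(lam:ℂ)+1) k * (k.factorial:ℂ)) * w^k * w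
      = ∑ k ∈ range (m+1), poch (-(m:ℂ)) k * poch ((lam:ℂ)+(eta:ℂ)*I+1) k /
        (poch (2*(lam:ℂ)+1) k * (k.factorial:ℂ)) * w^k * w := by
    rw [Finset.sum_range_succ, poch_neg_nat_eq_zero (Nat.lt_succ_self m)]
    simp
  rw [ext3]
  -- peel off the k = 0 terms
  rw [Finset.sum_range_succ' (fun k => poch (-(↑(m+1):ℂ)) k * poch ((lam:ℂ)+(eta:ℂ)*I) k /
        (poch (2*(lam:ℂ)) k * (k.factorial:ℂ)) * w^k) (m+1),
      Finset.sum_range_succ' (fun k => poch (-(m:ℂ)) k * poch ((lam:ℂ)+(eta:ℂ)*I+1) k /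
        (poch (2*(lam:ℂ)+1) k * (k.factorial:ℂ)) * w^k) (m+1),
      Finset.sum_range_succ' (fun k => poch (-(m:ℂ)) k * poch ((lam:ℂ)+(eta:ℂ)*I) k /
        (poch (2*(lam:ℂ)+1) k * (k.factorial:ℂ)) * w^k) (m+1)]
  have hterm : ∀ j ∈ range (m+1),
      2*(lam:ℂ) * (poch (-(↑(m+1):ℂ)) (j+1) * poch ((lam:ℂ)+(eta:ℂ)*I) (j+1) /
          (poch (2*(lam:ℂ)) (j+1) * ((j+1).factorial:ℂ)) * w^(j+1))
      = ((lam:ℂ)+(eta:ℂ)*I) * (poch (-(m:ℂ)) (j+1) * poch ((lam:ℂ)+(eta:ℂ)*I+1) (j+1) /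
            (poch (2*(lam:ℂ)+1) (j+1) * ((j+1).factorial:ℂ)) * w^(j+1))
        - ((lam:ℂ)+(eta:ℂ)*I) * (poch (-(m:ℂ)) j * poch ((lam:ℂ)+(eta:ℂ)*I+1) j /
            (poch (2*(lam:ℂ)+1) j * (j.factorial:ℂ)) * w^j * w)
        + ((lam:ℂ)-(eta:ℂ)*I) * (poch (-(m:ℂ)) (j+1) * poch ((lam:ℂ)+(eta:ℂ)*I) (j+1) /
            (poch (2*(lam:ℂ)+1) (j+1) * ((j+1).factorial:ℂ)) * w^(j+1)) := by
    intro j _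
    exact coeff_id lam eta hlam m j w
  have hsum := Finset.sum_congr rfl hterm
  rw [← Finset.mul_sum] at hsum
  rw [Finset.sum_add_distrib, Finset.sum_sub_distrib, ← Finset.mul_sum, ← Finset.mul_sum,
    ← Finset.mul_sum] at hsum
  simp only [poch_zero, Nat.factorial_zero, Nat.cast_one, pow_zero, mul_one, one_mul, div_one]
  linear_combination hsum

lemma star_eq (lam eta : ℝ) (hlam : 0 < lam) (m : ℕ) (z : ℂ) (hz : z ≠ 0) :
    PhiStar lam eta m z
      = (poch (2*(lam:ℂ)+1) m / poch ((lam:ℂ)-(eta:ℂ)*I+1) m) *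
        ∑ j ∈ range (m+1), poch (-(m:ℂ)) j * poch ((lam:ℂ)+(eta:ℂ)*I) j /
            (poch (2*(lam:ℂ)+1) j * (j.factorial:ℂ)) * (1-z)^j := by
  have hγ : ∀ k : ℕ, poch (2*(lam:ℂ)+1) k ≠ 0 := fun k => poch_ne_zero (re2l1 lam hlam) k
  simp only [PhiStar, Phi, map_mul, map_div₀, map_sum, map_pow, map_sub, map_one, map_inv₀,
    Complex.conj_conj, poch_conj, map_add, map_neg, map_natCast, map_ofNat,
    Complex.conj_ofReal, Complex.conj_I, mul_neg, ← sub_eq_add_neg]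
  have key : z^m * ((poch (2*(lam:ℂ)+1) m / poch ((lam:ℂ)-(eta:ℂ)*I+1) m) *
      ∑ k ∈ range (m+1), poch (-(m:ℂ)) k * poch ((lam:ℂ)-(eta:ℂ)*I+1) k /
          (poch (2*(lam:ℂ)+1) k * (k.factorial:ℂ)) * (1-z⁻¹)^k)
      = (poch (2*(lam:ℂ)+1) m / poch ((lam:ℂ)-(eta:ℂ)*I+1) m) *
        ∑ k ∈ range (m+1), poch (-(m:ℂ)) k * poch ((lam:ℂ)-(eta:ℂ)*I+1) k /
          (poch (2*(lam:ℂ)+1) k * (k.factorial:ℂ)) * ((-(1-z))^k * (1-(1-z))^(m-k)) := by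
    rw [mul_left_comm, Finset.mul_sum, Finset.mul_sum, Finset.mul_sum]
    apply Finset.sum_congr rfl
    intro k hk
    congr 1
    have hk' : k ≤ m := Nat.lt_succ_iff.mp (Finset.mem_range.mp hk)
    have hzk : (1 - z⁻¹)^k * z^k = (z-1)^k := by
      rw [← mul_pow]; congr 1; field_simp
    have hzm : z^m = z^k * z^(m-k) := by
      rw [← pow_add, Nat.add_sub_cancel' hk']
    simp only [neg_sub, sub_sub_cancel]
    rw [hzm]
    calc z^k * z^(m-k) * (poch (-(m:ℂ)) k * poch ((lam:ℂ)-(eta:ℂ)*I+1) k /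
          (poch (2*(lam:ℂ)+1) k * (k.factorial:ℂ)) * (1-z⁻¹)^k)
        = poch (-(m:ℂ)) k * poch ((lam:ℂ)-(eta:ℂ)*I+1) k /
          (poch (2*(lam:ℂ)+1) k * (k.factorial:ℂ)) * ((1-z⁻¹)^k * z^k) * z^(m-k) := by ring
      _ = _ := by rw [hzk]; ring
  rw [key, pfaff ((lam:ℂ)-(eta:ℂ)*I+1) (2*(lam:ℂ)+1) hγ m (1-z)]
  have heq : 2*(lam:ℂ)+1 - ((lam:ℂ)-(eta:ℂ)*I+1) = (lam:ℂ)+(eta:ℂ)*I := by ring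
  rw [heq]

lemma genR (b c pb pc P Q SB SC z : ℂ) (hb : b ≠ 0) (hpb : pb ≠ 0) (hpc : pc ≠ 0) (hQ : Q ≠ 0) :
    b * pb / Q * (z * (P / pb * SB) + c * pc / (b * pb) * (P / pc * SC))
      = Q⁻¹ * (P * (b * z * SB + c * SC)) := by
  simp only [div_eq_mul_inv, mul_inv]
  have e1 : pb * pb⁻¹ = 1 := mul_inv_cancel₀ hpb
  have e2 : pc * pc⁻¹ = 1 := mul_inv_cancel₀ hpc
  have e3 : b * b⁻¹ = 1 := mul_inv_cancel₀ hb
  linear_combination (Q⁻¹*z*P*SB*b)*e1 + (Q⁻¹*P*c*SC*pc*pc⁻¹*b*b⁻¹)*e1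
    + (Q⁻¹*P*c*SC*b*b⁻¹)*e2 + (Q⁻¹*P*c*SC)*e3

theorem stmt9 (lam eta : ℝ) (hlam : 0 < lam) (n : ℕ) (hn : 1 ≤ n) (z : ℂ) (hz : z ≠ 0) :
    RR lam eta n z =
      (poch ((lam : ℂ) + (eta : ℂ) * I) n / poch (lam : ℂ) n) *
        (z * Phi lam eta (n - 1) z +
          (poch ((lam : ℂ) - (eta : ℂ) * I) n / poch ((lam : ℂ) + (eta : ℂ) * I) n) *
            PhiStar lam eta (n - 1) z) := by
  obtain ⟨m, rfl⟩ : ∃ m, n = m + 1 := ⟨n - 1, (Nat.succ_pred_eq_of_pos hn).symm⟩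
  simp only [Nat.add_sub_cancel]
  have hB : poch ((lam:ℂ)+(eta:ℂ)*I+1) m ≠ 0 := poch_ne_zero (reb1 lam eta hlam) m
  have hC : poch ((lam:ℂ)-(eta:ℂ)*I+1) m ≠ 0 := poch_ne_zero (rebb1 lam eta hlam) m
  have hQ : poch ((lam:ℂ)) (m+1) ≠ 0 := poch_ne_zero (relam lam hlam) (m+1)
  have hbne : ((lam:ℂ)+(eta:ℂ)*I) ≠ 0 := _root_.ne_zero_of_re_pos (reb lam eta hlam)
  rw [star_eq lam eta hlam m z hz]
  simp only [RR, Phi]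
  rw [poch_succ_left ((lam:ℂ)+(eta:ℂ)*I) m, poch_succ_left ((lam:ℂ)-(eta:ℂ)*I) m,
      poch_succ_left (2*(lam:ℂ)) m]
  have key := main_id lam eta hlam m z
  set SA := ∑ k ∈ range (m+1+1), poch (-(↑(m+1):ℂ)) k * poch ((lam:ℂ)+(eta:ℂ)*I) k /
      (poch (2*(lam:ℂ)) k * (k.factorial:ℂ)) * (1-z)^k with hSA
  set SB := ∑ k ∈ range (m+1), poch (-(m:ℂ)) k * poch ((lam:ℂ)+(eta:ℂ)*I+1) k /
      (poch (2*(lam:ℂ)+1) k * (k.factorial:ℂ)) * (1-z)^k with hSB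
  set SC := ∑ k ∈ range (m+1), poch (-(m:ℂ)) k * poch ((lam:ℂ)+(eta:ℂ)*I) k /
      (poch (2*(lam:ℂ)+1) k * (k.factorial:ℂ)) * (1-z)^k with hSC
  set P := poch (2*(lam:ℂ)+1) m with hP
  set Q := poch ((lam:ℂ)) (m+1) with hQd
  -- LHS
  have stepL : 2*(lam:ℂ) * P / Q * SA = Q⁻¹ * (P * (2*(lam:ℂ) * SA)) := by ring
  have stepR : ((lam:ℂ)+(eta:ℂ)*I) * poch ((lam:ℂ)+(eta:ℂ)*I+1) m / Q *
        (z * (P / poch ((lam:ℂ)+(eta:ℂ)*I+1) m * SB) +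
          ((lam:ℂ)-(eta:ℂ)*I) * poch ((lam:ℂ)-(eta:ℂ)*I+1) m /
              (((lam:ℂ)+(eta:ℂ)*I) * poch ((lam:ℂ)+(eta:ℂ)*I+1) m) *
            (P / poch ((lam:ℂ)-(eta:ℂ)*I+1) m * SC))
      = Q⁻¹ * (P * (((lam:ℂ)+(eta:ℂ)*I) * z * SB + ((lam:ℂ)-(eta:ℂ)*I) * SC)) :=
    genR _ _ _ _ _ _ _ _ _ hbne hB hC hQ
  rw [stepL, stepR, key]
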